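/- arXiv:2406.19785 — 2 statements merged into one kernel-verified Lean document; each statement's English description precedes it below -/
import Mathlib

section
/- The following identity holds: ∫_0^{1/4} log(Γ(x)/Γ(1-x)) dx + 3 ∫_{1/2}^{3/4} log(Γ(x)/Γ(1-x)) dx = (1/4) log 2. -/
open Real MeasureTheory Set intervalIntegral

noncomputable def gg : ℝ → ℝ := fun x => Real.log (Real.Gamma x / Real.Gamma (1 - x))

lemma Gamma_contAt {x : ℝ} (hx : 0 < x) : ContinuousAt Real.Gamma x :=
  (Real.differentiableAt_Gamma fun m =>
    ((neg_nonpos.mpr (Nat.cast_nonneg m)).trans_lt hx).ne').continuousAt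

lemma gg_contAt {x : ℝ} (hx : 0 < x) (hx' : x < 1) : ContinuousAt gg x := by
  have c1 : ContinuousAt Real.Gamma x := Gamma_contAt hx
  have c2 : ContinuousAt (fun y : ℝ => Real.Gamma (1 - y)) x := by
    have h1 : ContinuousAt (fun y : ℝ => 1 - y) x := by fun_prop
    have := ContinuousAt.comp (f := fun y : ℝ => 1 - y) (x := x) (Gamma_contAt (show (0:ℝ) < 1 - x by linarith)) h1
    exact this
  have h1 : Real.Gamma x ≠ 0 := (Real.Gamma_pos_of_pos hx).ne'
  have h2 : Real.Gamma (1 - x) ≠ 0 := (Real.Gamma_pos_of_pos (by linarith)).ne'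
  exact (c1.div c2 h2).log (div_ne_zero h1 h2)

lemma gg_ii {a b : ℝ} (ha : 0 < a) (ha' : a < 1) (hb : 0 < b) (hb' : b < 1) :
    IntervalIntegrable gg volume a b := by
  apply ContinuousOn.intervalIntegrable
  intro x hx
  have h1 : min a b ≤ x := hx.1
  have h2 : x ≤ max a b := hx.2
  exact (gg_contAt (lt_of_lt_of_le (lt_min ha hb) h1)
    (lt_of_le_of_lt h2 (max_lt ha' hb'))).continuousWithinAt

lemma log_ii : IntervalIntegrable Real.log volume 0 (1 / 4) := by
  have h := intervalIntegrable_deriv_of_nonneg (g := fun x => x - x * Real.log x)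
    (g' := fun x => -Real.log x) (a := (0 : ℝ)) (b := 1 / 4)
    ((continuous_id.sub Real.continuous_mul_log).continuousOn)
    (fun x hx => by
      have hx' : x ∈ Ioo (0:ℝ) (1/4) := by norm_num at hx; exact hx
      have hx0 : 0 < x := hx'.1
      have h1 : HasDerivAt (fun y : ℝ => y * Real.log y) (Real.log x + 1) x := by
        have := (hasDerivAt_id x).mul (Real.hasDerivAt_log hx0.ne')
        exact this.congr_deriv (by simp only [id, one_mul, mul_inv_cancel₀ hx0.ne'])
      have := (hasDerivAt_id x).sub h1
      exact this.congr_deriv (by ring))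
    (fun x hx => by
      have hx' : x ∈ Ioo (0:ℝ) (1/4) := by norm_num at hx; exact hx
      have hlog : Real.log x ≤ 0 := Real.log_nonpos hx'.1.le (by linarith [hx'.2])
      show (0:ℝ) ≤ -Real.log x
      linarith)
  have heq : Real.log = -(fun x : ℝ => -Real.log x) := by funext x; simp
  rw [heq]
  exact h.neg

lemma gg_ii0 : IntervalIntegrable gg volume 0 (1 / 4) := by
  have hcont : IntervalIntegrable
      (fun x => Real.log (Real.Gamma (x + 1)) - Real.log (Real.Gamma (1 - x))) volume 0 (1/4) := by
    apply ContinuousOn.intervalIntegrable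
    intro x hx
    have h1 : (0:ℝ) ≤ x := by simpa using hx.1
    have h2 : x ≤ 1/4 := by simpa using hx.2
    have d1 : ContinuousAt (fun y : ℝ => Real.Gamma (y + 1)) x := by
      have h1 : ContinuousAt (fun y : ℝ => y + 1) x := by fun_prop
      have := ContinuousAt.comp (f := fun y : ℝ => y + 1) (x := x) (Gamma_contAt (show (0:ℝ) < x + 1 by linarith)) h1
      exact this
    have d2 : ContinuousAt (fun y : ℝ => Real.Gamma (1 - y)) x := by
      have h1 : ContinuousAt (fun y : ℝ => 1 - y) x := by fun_prop
      have := ContinuousAt.comp (f := fun y : ℝ => 1 - y) (x := x) (Gamma_contAt (show (0:ℝ) < 1 - x by linarith)) h1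
      exact this
    have c1 := d1.log (Real.Gamma_pos_of_pos (show (0:ℝ) < x + 1 by linarith)).ne'
    have c2 := d2.log (Real.Gamma_pos_of_pos (show (0:ℝ) < 1 - x by linarith)).ne'
    exact (c1.sub c2).continuousWithinAt
  have hii := hcont.sub log_ii
  rw [intervalIntegrable_iff_integrableOn_Ioc_of_le (by norm_num)] at hii ⊢
  apply hii.congr_fun ?_ measurableSet_Ioc
  intro x hx
  obtain ⟨hx0, hx1⟩ := hx
  have hgx : Real.Gamma x = Real.Gamma (x + 1) / x := by
    rw [Real.Gamma_add_one hx0.ne']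
    field_simp
  have p1 : (0:ℝ) < Real.Gamma (x + 1) := Real.Gamma_pos_of_pos (by linarith)
  have p2 : (0:ℝ) < Real.Gamma (1 - x) := Real.Gamma_pos_of_pos (by linarith)
  show Real.log (Real.Gamma (x+1)) - Real.log (Real.Gamma (1-x)) - Real.log x = gg x
  unfold gg
  rw [hgx, div_div, Real.log_div p1.ne' (by positivity), Real.log_mul hx0.ne' p2.ne']
  ring

lemma gg_neg (x : ℝ) : gg (1 - x) = - gg x := by
  unfold gg
  rw [show (1:ℝ) - (1 - x) = x by ring, ← Real.log_inv, inv_div]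

lemma gg_dup {x : ℝ} (hx : 0 < x) (hx' : x ≤ 1 / 4) :
    gg (2 * x) = (4 * x - 1) * Real.log 2 + gg x + gg (x + 1 / 2) := by
  have p1 : (0:ℝ) < Real.Gamma x := Real.Gamma_pos_of_pos hx
  have p2 : (0:ℝ) < Real.Gamma (x + 1/2) := Real.Gamma_pos_of_pos (by linarith)
  have p3 : (0:ℝ) < Real.Gamma (2 * x) := Real.Gamma_pos_of_pos (by linarith)
  have p4 : (0:ℝ) < Real.Gamma (1 - x) := Real.Gamma_pos_of_pos (by linarith)
  have p5 : (0:ℝ) < Real.Gamma (1/2 - x) := Real.Gamma_pos_of_pos (by linarith)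
  have p6 : (0:ℝ) < Real.Gamma (1 - 2 * x) := Real.Gamma_pos_of_pos (by linarith)
  have psqrt : (0:ℝ) < Real.sqrt π := Real.sqrt_pos.mpr Real.pi_pos
  have prpow1 : (0:ℝ) < (2:ℝ) ^ (1 - 2 * x) := Real.rpow_pos_of_pos two_pos _
  have prpow2 : (0:ℝ) < (2:ℝ) ^ (2 * x) := Real.rpow_pos_of_pos two_pos _
  have E1 := Real.Gamma_mul_Gamma_add_half x
  have E2 := Real.Gamma_mul_Gamma_add_half (1/2 - x)
  rw [show 1 - 2 * ((1:ℝ)/2 - x) = 2*x by ring, show (1:ℝ)/2 - x + 1/2 = 1 - x by ring,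
    show 2 * ((1:ℝ)/2 - x) = 1 - 2*x by ring] at E2
  have L1 := congrArg Real.log E1
  rw [Real.log_mul p1.ne' p2.ne', Real.log_mul (by positivity) psqrt.ne',
    Real.log_mul p3.ne' prpow1.ne', Real.log_rpow two_pos] at L1
  have L2 := congrArg Real.log E2
  rw [Real.log_mul p5.ne' p4.ne', Real.log_mul (by positivity) psqrt.ne',
    Real.log_mul p6.ne' prpow2.ne', Real.log_rpow two_pos] at L2
  unfold gg
  rw [show (1:ℝ) - 2 * x = 1 - 2 * x from rfl, show (1:ℝ) - (x + 1/2) = 1/2 - x by ring,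
    Real.log_div p3.ne' p6.ne', Real.log_div p1.ne' p4.ne', Real.log_div p2.ne' p5.ne']
  linarith

theorem integral_log_gamma_ratio_two_two_two :
    (∫ x in (0 : ℝ)..(1 / 4 : ℝ), Real.log (Real.Gamma x / Real.Gamma (1 - x)))
      + 3 * (∫ x in (1 / 2 : ℝ)..(3 / 4 : ℝ), Real.log (Real.Gamma x / Real.Gamma (1 - x)))
      = (1 / 4) * Real.log 2 := by
  show (∫ x in (0:ℝ)..(1/4 : ℝ), gg x) + 3 * (∫ x in (1/2:ℝ)..(3/4:ℝ), gg x) = 1/4 * Real.log 2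
  set I1 := ∫ x in (0:ℝ)..(1/4:ℝ), gg x with hI1
  set I2 := ∫ x in (1/4:ℝ)..(1/2:ℝ), gg x with hI2
  set I3 := ∫ x in (1/2:ℝ)..(3/4:ℝ), gg x with hI3
  have int01 : IntervalIntegrable gg volume 0 (1/4) := gg_ii0
  have int12 : IntervalIntegrable gg volume (1/4) (1/2) := gg_ii (by norm_num) (by norm_num) (by norm_num) (by norm_num)
  have int23 : IntervalIntegrable gg volume (1/2) (3/4) := gg_ii (by norm_num) (by norm_num) (by norm_num) (by norm_num)
  -- symmetry: I3 = -I2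
  have e1 : I3 = -I2 := by
    have h : (∫ x in (1/4:ℝ)..(1/2:ℝ), gg (1 - x)) = ∫ x in (1/2:ℝ)..(3/4:ℝ), gg x := by
      rw [intervalIntegral.integral_comp_sub_left gg 1]
      norm_num
    rw [hI3, ← h, hI2]
    simp only [gg_neg, intervalIntegral.integral_neg]
  -- duplication
  have hcm : ∫ x in (0:ℝ)..(1/4:ℝ), gg (2 * x) = (2:ℝ)⁻¹ • ∫ x in (0:ℝ)..(1/2:ℝ), gg x := by
    rw [intervalIntegral.integral_comp_mul_left gg two_ne_zero]
    norm_num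
  have hsplit : ∫ x in (0:ℝ)..(1/2:ℝ), gg x = I1 + I2 :=
    (intervalIntegral.integral_add_adjacent_intervals int01 int12).symm
  have hcongr : ∫ x in (0:ℝ)..(1/4:ℝ), gg (2 * x)
      = ∫ x in (0:ℝ)..(1/4:ℝ), ((4 * x - 1) * Real.log 2 + gg x + gg (x + 1/2)) := by
    apply intervalIntegral.integral_congr_ae
    filter_upwards with x hx
    rw [Set.uIoc_of_le (by norm_num)] at hx
    exact gg_dup hx.1 hx.2
  have intA : IntervalIntegrable (fun x : ℝ => (4 * x - 1) * Real.log 2) volume 0 (1/4) :=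
    (((continuous_const.mul continuous_id').sub continuous_const).mul
      continuous_const).intervalIntegrable _ _
  have intC : IntervalIntegrable (fun x : ℝ => gg (x + 1/2)) volume 0 (1/4) := by
    have h := int23.comp_add_right (1/2)
    norm_num at h
    exact h
  have hA : ∫ x in (0:ℝ)..(1/4:ℝ), (4 * x - 1) * Real.log 2 = -(1/8) * Real.log 2 := by
    rw [intervalIntegral.integral_mul_const]
    congr 1
    rw [intervalIntegral.integral_sub (f := fun x : ℝ => 4 * x) (g := fun _ => (1:ℝ)) ((continuous_const.mul continuous_id').intervalIntegrable _ _)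
      (intervalIntegrable_const), intervalIntegral.integral_const_mul, integral_id]
    norm_num
  have hC : ∫ x in (0:ℝ)..(1/4:ℝ), gg (x + 1/2) = I3 := by
    rw [intervalIntegral.integral_comp_add_right gg (1/2), hI3]
    norm_num
  have hlin : ∫ x in (0:ℝ)..(1/4:ℝ), ((4 * x - 1) * Real.log 2 + gg x + gg (x + 1/2))
      = -(1/8) * Real.log 2 + I1 + I3 := by
    rw [intervalIntegral.integral_add (intA.add int01) intC,
      intervalIntegral.integral_add intA int01, hA, hC, hI1]
  have e2 : (2:ℝ)⁻¹ * (I1 + I2) = -(1/8) * Real.log 2 + I1 + I3 := by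
    rw [← hsplit, ← smul_eq_mul, ← hcm, hcongr, hlin]
  linarith
end

section
/- Complex beta integral: for real w₁, w₂ with 0 < w₁ < 1, 0 < w₂ < 1 and w₁ + w₂ > 1, ∫_{ℂ} |z|^{−2w₁} |1−z|^{−2w₂} dA(z) = π · Γ(1−w₁) Γ(1−w₂) Γ(w₁+w₂−1) / ( Γ(w₁) Γ(w₂) Γ(2−w₁−w₂) ), where dA is Lebesgue measure on ℂ ≅ ℝ². -/
open MeasureTheory Real Set
open scoped ENNReal

namespace ComplexBetaAux


@[fun_prop] lemma measurable_cabs : Measurable fun z : ℂ => ‖z‖ :=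
  continuous_norm.measurable

attribute [fun_prop] Real.measurable_exp

/-- Gamma-type lintegral. -/
lemma L1 {w c : ℝ} (hw : 0 < w) (hc : 0 < c) :
    ∫⁻ t in Ioi (0:ℝ), ENNReal.ofReal (t ^ (w-1) * rexp (-(c * t)))
      = ENNReal.ofReal (c ^ (-w) * Real.Gamma w) := by
  rw [← ofReal_integral_eq_lintegral_ofReal]
  · rw [Real.integral_rpow_mul_exp_neg_mul_Ioi hw hc, one_div, Real.inv_rpow hc.le,
      ← Real.rpow_neg hc.le]
  · have := integrableOn_rpow_mul_exp_neg_mul_rpow (p := 1) (s := w - 1) (b := c)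
      (by linarith) one_pos hc
    simpa [Real.rpow_one, neg_mul, IntegrableOn] using this
  · filter_upwards [ae_restrict_mem measurableSet_Ioi] with t ht
    exact mul_nonneg (Real.rpow_nonneg ht.le _) (Real.exp_nonneg _)

/-- Scaling of a lintegral over `Ioi 0`. -/
lemma L2 (f : ℝ → ℝ≥0∞) (hf : Measurable f) {a : ℝ} (ha : 0 < a) :
    ∫⁻ s in Ioi (0:ℝ), f s = ENNReal.ofReal a * ∫⁻ σ in Ioi (0:ℝ), f (a * σ) := by
  have hmap : ∫⁻ y in Ioi (0:ℝ), f y ∂(Measure.map (fun x => a * x) volume)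
      = ∫⁻ x in (fun x => a * x) ⁻¹' (Ioi 0), f (a * x) :=
    setLIntegral_map measurableSet_Ioi hf (measurable_const_mul a)
  have hpre : (fun x => a * x) ⁻¹' (Ioi (0:ℝ)) = Ioi 0 := by
    ext x; simp [mul_pos_iff_of_pos_left, ha]
  rw [Real.map_volume_mul_left (ne_of_gt ha)] at hmap
  rw [hpre] at hmap
  rw [Measure.restrict_smul, lintegral_smul_measure] at hmap
  rw [← hmap, smul_eq_mul, ← mul_assoc, ← ENNReal.ofReal_mul ha.le, abs_of_pos (inv_pos.2 ha),
    mul_inv_cancel₀ (ne_of_gt ha), ENNReal.ofReal_one, one_mul]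

/-- Gaussian integral over ℂ. -/
lemma L3a {a : ℝ} (ha : 0 < a) :
    ∫⁻ z : ℂ, ENNReal.ofReal (rexp (-(a * ‖z‖ ^ 2))) = ENNReal.ofReal (π / a) := by
  have key : ∀ z : ℂ, rexp (-(a * ‖z‖ ^ 2))
      = rexp (-a * (Complex.measurableEquivRealProd z).1 ^ 2)
        * rexp (-a * (Complex.measurableEquivRealProd z).2 ^ 2) := by
    intro z
    show rexp _ = rexp (-a * z.re ^ 2) * rexp (-a * z.im ^ 2)
    rw [← Real.exp_add, Complex.sq_norm, Complex.normSq_apply]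
    ring_nf
  simp_rw [key]
  rw [(Complex.volume_preserving_equiv_real_prod).lintegral_comp
    (f := fun p : ℝ × ℝ => ENNReal.ofReal (rexp (-a * p.1 ^ 2) * rexp (-a * p.2 ^ 2)))
    (by fun_prop)]
  rw [← ofReal_integral_eq_lintegral_ofReal]
  · rw [Measure.volume_eq_prod, integral_prod_mul (f := fun x : ℝ => rexp (-a * x ^ 2))
      (g := fun x : ℝ => rexp (-a * x ^ 2)), integral_gaussian,
      Real.mul_self_sqrt (by positivity)]
  · rw [Measure.volume_eq_prod]
    exact (integrable_exp_neg_mul_sq ha).mul_prod (integrable_exp_neg_mul_sq ha)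
  · filter_upwards with p
    positivity

/-- Completing the square. -/
lemma L4 {t s : ℝ} (ht : 0 < t) (hs : 0 < s) (z : ℂ) :
    t * ‖z‖ ^ 2 + s * ‖1 - z‖ ^ 2
      = (t + s) * ‖z - ((s / (t + s) : ℝ) : ℂ)‖ ^ 2 + t * s / (t + s) := by
  have hts : t + s ≠ 0 := by positivity
  simp only [Complex.sq_norm, Complex.normSq_apply, Complex.sub_re, Complex.sub_im,
    Complex.one_re, Complex.one_im, Complex.ofReal_re, Complex.ofReal_im]
  field_simp
  ring

/-- Shifted Gaussian integral over ℂ. -/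
lemma L5 {t s : ℝ} (ht : 0 < t) (hs : 0 < s) :
    ∫⁻ z : ℂ, ENNReal.ofReal (rexp (-(t * ‖z‖ ^ 2 + s * ‖1 - z‖ ^ 2)))
      = ENNReal.ofReal (rexp (-(t * s / (t + s))) * (π / (t + s))) := by
  set c : ℂ := ((s / (t + s) : ℝ) : ℂ) with hc
  have key : ∀ z : ℂ, rexp (-(t * ‖z‖ ^ 2 + s * ‖1 - z‖ ^ 2))
      = rexp (-(t * s / (t + s))) * rexp (-((t + s) * ‖z + -c‖ ^ 2)) := by
    intro z
    rw [← sub_eq_add_neg, ← Real.exp_add, L4 ht hs z]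
    congr 1
    ring
  simp_rw [key, ENNReal.ofReal_mul (Real.exp_nonneg _)]
  have hmeas : Measurable fun z : ℂ =>
      ENNReal.ofReal (rexp (-((t + s) * ‖z + -c‖ ^ 2))) := by fun_prop
  rw [lintegral_const_mul _ hmeas]
  rw [lintegral_add_right_eq_self
    (fun z : ℂ => ENNReal.ofReal (rexp (-((t + s) * ‖z‖ ^ 2)))) (-c)]
  rw [L3a (by positivity), ← ENNReal.ofReal_mul (Real.exp_nonneg _)]

/-- Subordination identity. -/
lemma subord {w : ℝ} (hw : 0 < w) {r : ℝ} (hr : 0 < r) :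
    ENNReal.ofReal (Real.Gamma w) * ENNReal.ofReal (r ^ (-2*w))
      = ∫⁻ t in Ioi (0:ℝ), ENNReal.ofReal (t ^ (w-1) * rexp (-(r^2 * t))) := by
  rw [L1 hw (by positivity)]
  rw [← ENNReal.ofReal_mul (Real.Gamma_pos_of_pos hw).le]
  congr 1
  have h2 : (r^2 : ℝ) ^ (-w) = r ^ (-2*w) := by
    rw [← Real.rpow_natCast r 2, ← Real.rpow_mul hr.le]
    norm_num
  rw [h2, mul_comm]


lemma realstep4 {w₁ w₂ t σ : ℝ} (ht : 0 < t) (hσ : 0 < σ) :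
    t * (t^(w₁-1) * (t*σ)^(w₂-1) * (rexp (-(t*(t*σ)/(t+t*σ))) * (π/(t+t*σ))))
      = π * (σ^(w₂-1) * (1+σ)⁻¹) * (t^((w₁+w₂-1)-1) * rexp (-(σ/(1+σ) * t))) := by
  have h1σ : (0:ℝ) < 1 + σ := by linarith
  have hne : t + t*σ ≠ 0 := by positivity
  have hne' : (1:ℝ) + σ ≠ 0 := by positivity
  rw [Real.mul_rpow ht.le hσ.le,
    show t*(t*σ)/(t+t*σ) = σ/(1+σ)*t by field_simp,
    show (w₁+w₂-1)-1 = (w₁-1)+(w₂-1) by ring, Real.rpow_add ht]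
  field_simp

lemma realstep5 {w₁ w₂ σ : ℝ} (hσ : 0 < σ) :
    π * (σ^(w₂-1) * (1+σ)⁻¹) * ((σ/(1+σ))^(-(w₁+w₂-1)) * Real.Gamma (w₁+w₂-1))
      = π * Real.Gamma (w₁+w₂-1) * (σ^((1-w₁)-1) * (1+σ)^(-(2-w₁-w₂))) := by
  have h1σ : (0:ℝ) < 1 + σ := by linarith
  have hne : ((1:ℝ)+σ)^(w₁+w₂-1) ≠ 0 := by positivity
  rw [Real.div_rpow hσ.le h1σ.le, Real.rpow_neg h1σ.le (w₁+w₂-1),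
    show ((1-w₁)-1 : ℝ) = (w₂-1) + (-(w₁+w₂-1)) by ring, Real.rpow_add hσ,
    show (-(2-w₁-w₂) : ℝ) = (w₁+w₂-1) + (-1) by ring, Real.rpow_add h1σ, Real.rpow_neg_one]
  field_simp


end ComplexBetaAux

open ComplexBetaAux


theorem complex_beta_integral (w₁ w₂ : ℝ) (h1 : 0 < w₁) (h1' : w₁ < 1)
    (h2 : 0 < w₂) (h2' : w₂ < 1) (h : 1 < w₁ + w₂) :
    ∫ z : ℂ, ‖z‖ ^ (-2 * w₁) * ‖1 - z‖ ^ (-2 * w₂)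
      = Real.pi * (Real.Gamma (1 - w₁) * Real.Gamma (1 - w₂) * Real.Gamma (w₁ + w₂ - 1))
          / (Real.Gamma w₁ * Real.Gamma w₂ * Real.Gamma (2 - w₁ - w₂)) := by
  have hΓ1 := Real.Gamma_pos_of_pos h1
  have hΓ2 := Real.Gamma_pos_of_pos h2
  have hΓ3 := Real.Gamma_pos_of_pos (show (0:ℝ) < 2 - w₁ - w₂ by linarith)
  have hΓa := Real.Gamma_pos_of_pos (show (0:ℝ) < 1 - w₁ by linarith)
  have hΓb := Real.Gamma_pos_of_pos (show (0:ℝ) < 1 - w₂ by linarith)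
  have hΓc := Real.Gamma_pos_of_pos (show (0:ℝ) < w₁ + w₂ - 1 by linarith)
  have hwc : (0:ℝ) < w₁ + w₂ - 1 := by linarith
  set g₁ := ENNReal.ofReal (Real.Gamma w₁) with hg₁
  set g₂ := ENNReal.ofReal (Real.Gamma w₂) with hg₂
  set g₃ := ENNReal.ofReal (Real.Gamma (2 - w₁ - w₂)) with hg₃
  set L := ∫⁻ z : ℂ, ENNReal.ofReal
      (‖z‖ ^ (-2 * w₁) * ‖1 - z‖ ^ (-2 * w₂)) with hL
  -- Step 1: subordination
  have step1 : g₁ * g₂ * L = ∫⁻ z : ℂ, ∫⁻ t in Ioi (0:ℝ), ∫⁻ s in Ioi (0:ℝ),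
      ENNReal.ofReal (t ^ (w₁-1) * s ^ (w₂-1) *
        rexp (-(t * ‖z‖ ^ 2 + s * ‖1 - z‖ ^ 2))) := by
    rw [hL, ← lintegral_const_mul (g₁ * g₂) (by fun_prop)]
    refine lintegral_congr_ae ?_
    have hae : ∀ᵐ z : ℂ, z ∉ ({0, 1} : Set ℂ) :=
      measure_eq_zero_iff_ae_notMem.mp (Set.Finite.measure_zero (by simp) _)
    filter_upwards [hae] with z hz
    simp only [Set.mem_insert_iff, Set.mem_singleton_iff, not_or] at hz
    have hz0 : 0 < ‖z‖ := norm_pos_iff.mpr hz.1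
    have hz1 : 0 < ‖1 - z‖ := norm_pos_iff.mpr (sub_ne_zero.mpr (Ne.symm hz.2))
    rw [ENNReal.ofReal_mul (Real.rpow_nonneg (norm_nonneg z) _), mul_mul_mul_comm,
      hg₁, hg₂, subord h1 hz0, subord h2 hz1,
      ← lintegral_mul_const _ (show Measurable fun t : ℝ =>
          ENNReal.ofReal (t ^ (w₁-1) * rexp (-(‖z‖ ^ 2 * t))) by fun_prop)]
    refine setLIntegral_congr_fun measurableSet_Ioi (fun t ht => ?_)
    rw [← lintegral_const_mul _ (show Measurable fun s : ℝ =>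
        ENNReal.ofReal (s ^ (w₂-1) * rexp (-(‖1 - z‖ ^ 2 * s))) by fun_prop)]
    refine setLIntegral_congr_fun measurableSet_Ioi (fun s hs => ?_)
    rw [← ENNReal.ofReal_mul (mul_nonneg (Real.rpow_nonneg (le_of_lt ht) _)
      (Real.exp_nonneg _))]
    congr 1
    rw [show -(t * ‖z‖ ^ 2 + s * ‖1 - z‖ ^ 2)
        = -(‖z‖ ^ 2 * t) + -(‖1 - z‖ ^ 2 * s) by ring, Real.exp_add]
    ring
  -- Step 2: swap z to inside
  have mH3 : Measurable fun p : (ℂ × ℝ) × ℝ =>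
      ENNReal.ofReal (p.1.2 ^ (w₁-1) * p.2 ^ (w₂-1) *
        rexp (-(p.1.2 * ‖p.1.1‖ ^ 2 + p.2 * ‖1 - p.1.1‖ ^ 2))) := by
    fun_prop
  have swap1 : (∫⁻ z : ℂ, ∫⁻ t in Ioi (0:ℝ), ∫⁻ s in Ioi (0:ℝ),
      ENNReal.ofReal (t ^ (w₁-1) * s ^ (w₂-1) *
        rexp (-(t * ‖z‖ ^ 2 + s * ‖1 - z‖ ^ 2))))
      = ∫⁻ t in Ioi (0:ℝ), ∫⁻ s in Ioi (0:ℝ), ∫⁻ z : ℂ,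
      ENNReal.ofReal (t ^ (w₁-1) * s ^ (w₂-1) *
        rexp (-(t * ‖z‖ ^ 2 + s * ‖1 - z‖ ^ 2))) := by
    rw [lintegral_lintegral_swap (Measurable.lintegral_prod_right' mH3).aemeasurable]
    refine setLIntegral_congr_fun measurableSet_Ioi (fun t ht => ?_)
    exact lintegral_lintegral_swap (by fun_prop : Measurable fun q : ℂ × ℝ =>
      ENNReal.ofReal (t ^ (w₁-1) * q.2 ^ (w₂-1) *
        rexp (-(t * ‖q.1‖ ^ 2 + q.2 * ‖1 - q.1‖ ^ 2)))).aemeasurable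
  -- Step 3: Gaussian evaluation of the z-integral
  have step3 : (∫⁻ t in Ioi (0:ℝ), ∫⁻ s in Ioi (0:ℝ), ∫⁻ z : ℂ,
      ENNReal.ofReal (t ^ (w₁-1) * s ^ (w₂-1) *
        rexp (-(t * ‖z‖ ^ 2 + s * ‖1 - z‖ ^ 2))))
      = ∫⁻ t in Ioi (0:ℝ), ∫⁻ s in Ioi (0:ℝ), ENNReal.ofReal
          (t ^ (w₁-1) * s ^ (w₂-1) * (rexp (-(t * s / (t + s))) * (π / (t + s)))) := by
    refine setLIntegral_congr_fun measurableSet_Ioi (fun t ht => ?_)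
    refine setLIntegral_congr_fun measurableSet_Ioi (fun s hs => ?_)
    have hmono : 0 ≤ t ^ (w₁-1) * s ^ (w₂-1) :=
      mul_nonneg (Real.rpow_nonneg (le_of_lt ht) _) (Real.rpow_nonneg (le_of_lt hs) _)
    simp_rw [ENNReal.ofReal_mul hmono]
    rw [lintegral_const_mul _ (by fun_prop), L5 ht hs]
  -- Step 4: scaling s = t σ
  have step4 : (∫⁻ t in Ioi (0:ℝ), ∫⁻ s in Ioi (0:ℝ), ENNReal.ofReal
      (t ^ (w₁-1) * s ^ (w₂-1) * (rexp (-(t * s / (t + s))) * (π / (t + s)))))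
      = ∫⁻ t in Ioi (0:ℝ), ∫⁻ σ in Ioi (0:ℝ), ENNReal.ofReal
          (π * (σ^(w₂-1) * (1+σ)⁻¹) * (t^((w₁+w₂-1)-1) * rexp (-(σ/(1+σ) * t)))) := by
    refine setLIntegral_congr_fun measurableSet_Ioi (fun t ht => ?_)
    rw [L2 (fun s => ENNReal.ofReal
      (t ^ (w₁-1) * s ^ (w₂-1) * (rexp (-(t * s / (t + s))) * (π / (t + s)))))
      (by fun_prop) ht]
    rw [← lintegral_const_mul _ (by fun_prop)]
    refine setLIntegral_congr_fun measurableSet_Ioi (fun σ hσ => ?_)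
    rw [← ENNReal.ofReal_mul (le_of_lt ht)]
    exact congrArg _ (realstep4 ht hσ)
  -- Step 5: swap and evaluate the t-integral
  have step5 : (∫⁻ t in Ioi (0:ℝ), ∫⁻ σ in Ioi (0:ℝ), ENNReal.ofReal
      (π * (σ^(w₂-1) * (1+σ)⁻¹) * (t^((w₁+w₂-1)-1) * rexp (-(σ/(1+σ) * t)))))
      = ENNReal.ofReal (π * Real.Gamma (w₁+w₂-1)) *
          ∫⁻ σ in Ioi (0:ℝ), ENNReal.ofReal (σ^((1-w₁)-1) * (1+σ)^(-(2-w₁-w₂))) := by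
    rw [lintegral_lintegral_swap (by fun_prop : Measurable fun q : ℝ × ℝ =>
      ENNReal.ofReal (π * (q.2^(w₂-1) * (1+q.2)⁻¹) *
        (q.1^((w₁+w₂-1)-1) * rexp (-(q.2/(1+q.2) * q.1))))).aemeasurable,
      ← lintegral_const_mul _ (by fun_prop)]
    refine setLIntegral_congr_fun measurableSet_Ioi (fun σ hσ => ?_)
    have hσ0 : (0:ℝ) < σ := mem_Ioi.mp hσ
    have h1σ : (0:ℝ) < 1 + σ := by linarith
    have hpos : 0 ≤ π * (σ^(w₂-1) * (1+σ)⁻¹) :=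
      mul_nonneg pi_pos.le (mul_nonneg (Real.rpow_nonneg hσ0.le _) (inv_nonneg.2 h1σ.le))
    simp_rw [ENNReal.ofReal_mul hpos]
    rw [lintegral_const_mul _ (by fun_prop), L1 hwc (div_pos hσ0 h1σ),
      ← ENNReal.ofReal_mul hpos, realstep5 hσ0,
      ENNReal.ofReal_mul (by positivity : (0:ℝ) ≤ π * Real.Gamma (w₁+w₂-1))]
  -- Step 6: evaluate D
  have step6 : g₃ * (∫⁻ σ in Ioi (0:ℝ), ENNReal.ofReal (σ^((1-w₁)-1) * (1+σ)^(-(2-w₁-w₂))))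
      = ENNReal.ofReal (Real.Gamma (1-w₁) * Real.Gamma (1-w₂)) := by
    rw [← lintegral_const_mul _ (by fun_prop)]
    have e1 : (∫⁻ σ in Ioi (0:ℝ), g₃ * ENNReal.ofReal (σ^((1-w₁)-1) * (1+σ)^(-(2-w₁-w₂))))
        = ∫⁻ σ in Ioi (0:ℝ), ∫⁻ u in Ioi (0:ℝ), ENNReal.ofReal
            ((u^((2-w₁-w₂)-1) * rexp (-u)) * (σ^((1-w₁)-1) * rexp (-(u*σ)))) := by
      refine setLIntegral_congr_fun measurableSet_Ioi (fun σ hσ => ?_)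
      have hσ0 := mem_Ioi.mp hσ
      have h1σ : (0:ℝ) < 1 + σ := by linarith
      rw [ENNReal.ofReal_mul (Real.rpow_nonneg hσ0.le _), mul_left_comm,
        show g₃ * ENNReal.ofReal ((1+σ)^(-(2-w₁-w₂)))
          = ENNReal.ofReal ((1+σ)^(-(2-w₁-w₂)) * Real.Gamma (2-w₁-w₂)) by
            rw [ENNReal.ofReal_mul (Real.rpow_nonneg h1σ.le _), mul_comm], ← L1 (by linarith) h1σ,
        ← lintegral_const_mul _ (by fun_prop)]
      refine setLIntegral_congr_fun measurableSet_Ioi (fun u hu => ?_)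
      rw [← ENNReal.ofReal_mul (Real.rpow_nonneg (le_of_lt (mem_Ioi.mp hσ)) _)]
      congr 1
      rw [show (-((1+σ)*u) : ℝ) = -u + -(u*σ) by ring, Real.exp_add]
      ring
    rw [e1, lintegral_lintegral_swap (by fun_prop : Measurable fun q : ℝ × ℝ =>
      ENNReal.ofReal ((q.2^((2-w₁-w₂)-1) * rexp (-q.2)) *
        (q.1^((1-w₁)-1) * rexp (-(q.2*q.1))))).aemeasurable]
    have e2 : (∫⁻ u in Ioi (0:ℝ), ∫⁻ σ in Ioi (0:ℝ), ENNReal.ofReal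
        ((u^((2-w₁-w₂)-1) * rexp (-u)) * (σ^((1-w₁)-1) * rexp (-(u*σ)))))
        = ∫⁻ u in Ioi (0:ℝ), ENNReal.ofReal (Real.Gamma (1-w₁)) *
            ENNReal.ofReal (u^((1-w₂)-1) * rexp (-(1*u))) := by
      refine setLIntegral_congr_fun measurableSet_Ioi (fun u hu => ?_)
      have hu0 := mem_Ioi.mp hu
      have hfac : 0 ≤ u^((2-w₁-w₂)-1) * rexp (-u) :=
        mul_nonneg (Real.rpow_nonneg hu0.le _) (Real.exp_nonneg _)
      simp_rw [ENNReal.ofReal_mul hfac]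
      rw [lintegral_const_mul _ (by fun_prop), L1 (by linarith) hu0,
        ← ENNReal.ofReal_mul hfac,
        ← ENNReal.ofReal_mul (Real.Gamma_pos_of_pos (show (0:ℝ) < 1 - w₁ by linarith)).le]
      congr 1
      rw [show ((1-w₂)-1 : ℝ) = ((2-w₁-w₂)-1) + (-(1-w₁)) by ring, Real.rpow_add hu0, one_mul]
      ring
    rw [e2, lintegral_const_mul _ (by fun_prop), L1 (show (0:ℝ) < 1 - w₂ by linarith) one_pos,
      Real.one_rpow, one_mul, ← ENNReal.ofReal_mul hΓa.le]
  -- Final assembly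
  have keyT : g₁ * g₂ * L = ENNReal.ofReal (π * Real.Gamma (w₁+w₂-1)) *
      ∫⁻ σ in Ioi (0:ℝ), ENNReal.ofReal (σ^((1-w₁)-1) * (1+σ)^(-(2-w₁-w₂))) :=
    step1.trans (swap1.trans (step3.trans (step4.trans step5)))
  have final1 : (g₁ * g₂ * g₃) * L = ENNReal.ofReal
      ((π * Real.Gamma (w₁+w₂-1)) * (Real.Gamma (1-w₁) * Real.Gamma (1-w₂))) := by
    calc (g₁ * g₂ * g₃) * L = g₃ * (g₁ * g₂ * L) := by ring
    _ = g₃ * (ENNReal.ofReal (π * Real.Gamma (w₁+w₂-1)) *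
        ∫⁻ σ in Ioi (0:ℝ), ENNReal.ofReal (σ^((1-w₁)-1) * (1+σ)^(-(2-w₁-w₂)))) := by rw [keyT]
    _ = ENNReal.ofReal (π * Real.Gamma (w₁+w₂-1)) * (g₃ *
        ∫⁻ σ in Ioi (0:ℝ), ENNReal.ofReal (σ^((1-w₁)-1) * (1+σ)^(-(2-w₁-w₂)))) := by ring
    _ = _ := by rw [step6, ← ENNReal.ofReal_mul (by positivity)]
  have hG : g₁ * g₂ * g₃
      = ENNReal.ofReal (Real.Gamma w₁ * Real.Gamma w₂ * Real.Gamma (2-w₁-w₂)) := by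
    rw [hg₁, hg₂, hg₃, ← ENNReal.ofReal_mul hΓ1.le, ← ENNReal.ofReal_mul (by positivity)]
  have hG0 : g₁ * g₂ * g₃ ≠ 0 := by
    rw [hG]; exact (ENNReal.ofReal_pos.mpr (by positivity)).ne'
  have hGt : g₁ * g₂ * g₃ ≠ ⊤ := by rw [hG]; exact ENNReal.ofReal_ne_top
  have hLval : L = (g₁ * g₂ * g₃)⁻¹ * ENNReal.ofReal
      ((π * Real.Gamma (w₁+w₂-1)) * (Real.Gamma (1-w₁) * Real.Gamma (1-w₂))) := by
    rw [← final1, ← mul_assoc, ENNReal.inv_mul_cancel hG0 hGt, one_mul]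
  have hnn : 0 ≤ᵐ[volume] fun z : ℂ =>
      ‖z‖ ^ (-2 * w₁) * ‖1 - z‖ ^ (-2 * w₂) :=
    ae_of_all _ fun z => mul_nonneg (Real.rpow_nonneg (norm_nonneg _) _)
      (Real.rpow_nonneg (norm_nonneg _) _)
  rw [integral_eq_lintegral_of_nonneg_ae hnn
    (by fun_prop : Measurable fun z : ℂ =>
      ‖z‖ ^ (-2 * w₁) * ‖1 - z‖ ^ (-2 * w₂)).aestronglyMeasurable,
    ← hL, hLval, hG, ENNReal.toReal_mul, ENNReal.toReal_inv,
    ENNReal.toReal_ofReal (by positivity), ENNReal.toReal_ofReal (by positivity)]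
  field_simp
end
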